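/- arXiv:1902.01423 — 2 statements merged into one kernel-verified Lean document; each statement's English description precedes it below -/
import Mathlib

section
/- Let Σ_N ≻ 0 be n×n, H an n×p matrix, H_F an n×m matrix, and for t > 0 define I(t) = Hᵀ (t · H_F H_Fᵀ + Σ_N)⁻¹ H. Then as t → ∞, I(t) converges to Hᵀ Σ_N⁻¹ H - Hᵀ Σ_N⁻¹ H_F (H_Fᵀ Σ_N⁻¹ H_F)⁺ H_Fᵀ Σ_N⁻¹ H, where ⁺ denotes Moore–Penrose pseudoinverse; in particular if H_F has full column rank the limit is Hᵀ Σ_N⁻¹ H - Hᵀ Σ_N⁻¹ H_F (H_Fᵀ Σ_N⁻¹ H_F)⁻¹ H_Fᵀ Σ_N⁻¹ H. -/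
open Matrix Filter Topology

/-- `P` is the Moore–Penrose pseudoinverse of `A` (the four Penrose conditions). -/
def IsMoorePenrose {a b : ℕ} (A : Matrix (Fin a) (Fin b) ℝ) (P : Matrix (Fin b) (Fin a) ℝ) : Prop :=
  A * P * A = A ∧ P * A * P = P ∧ (A * P)ᵀ = A * P ∧ (P * A)ᵀ = P * A

lemma mp_unique {a b : ℕ} {A : Matrix (Fin a) (Fin b) ℝ} {P Q : Matrix (Fin b) (Fin a) ℝ}
    (hP : IsMoorePenrose A P) (hQ : IsMoorePenrose A Q) : P = Q := by
  obtain ⟨hP1, hP2, hP3, hP4⟩ := hP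
  obtain ⟨hQ1, hQ2, hQ3, hQ4⟩ := hQ
  have hAP : A * P = A * Q := by
    calc A * P = (A * Q * A) * P := by rw [hQ1]
    _ = (A * Q) * (A * P) := by rw [Matrix.mul_assoc]
    _ = (A * Q)ᵀ * (A * P)ᵀ := by rw [hQ3, hP3]
    _ = ((A * P) * (A * Q))ᵀ := (Matrix.transpose_mul _ _).symm
    _ = ((A * P * A) * Q)ᵀ := by simp only [Matrix.mul_assoc]
    _ = (A * Q)ᵀ := by rw [hP1]
    _ = A * Q := hQ3
  have hPA : P * A = Q * A := by
    calc P * A = P * (A * Q * A) := by rw [hQ1]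
    _ = (P * A) * (Q * A) := by simp only [Matrix.mul_assoc]
    _ = (P * A)ᵀ * (Q * A)ᵀ := by rw [hQ4, hP4]
    _ = ((Q * A) * (P * A))ᵀ := (Matrix.transpose_mul _ _).symm
    _ = (Q * (A * P * A))ᵀ := by simp only [Matrix.mul_assoc]
    _ = (Q * A)ᵀ := by rw [hP1]
    _ = Q * A := hQ4
  calc P = P * A * P := hP2.symm
  _ = Q * A * P := by rw [hPA]
  _ = Q * (A * P) := by rw [Matrix.mul_assoc]
  _ = Q * (A * Q) := by rw [hAP]
  _ = Q := by rw [← Matrix.mul_assoc, hQ2]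

lemma mp_symm {a : ℕ} {A P : Matrix (Fin a) (Fin a) ℝ} (hA : Aᵀ = A)
    (h : IsMoorePenrose A P) : Pᵀ = P := by
  obtain ⟨h1, h2, h3, h4⟩ := h
  refine mp_unique (A := A) ?_ ⟨h1, h2, h3, h4⟩
  constructor
  · calc A * Pᵀ * A = (Aᵀ * P * Aᵀ)ᵀ := by simp [Matrix.transpose_mul, Matrix.mul_assoc]
    _ = A := by rw [hA, h1, hA]
  refine ⟨?_, ?_, ?_⟩
  · calc Pᵀ * A * Pᵀ = (Pᵀ * Aᵀ * Pᵀ)ᵀᵀ := by rw [Matrix.transpose_transpose]; rw [hA]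
    _ = (P * A * P)ᵀ := by simp [Matrix.transpose_mul, Matrix.mul_assoc]
    _ = Pᵀ := by rw [h2]
  · calc (A * Pᵀ)ᵀ = P * Aᵀ := by simp [Matrix.transpose_mul]
    _ = P * A := by rw [hA]
    _ = (P * A)ᵀ := h4.symm
    _ = Aᵀ * Pᵀ := by simp [Matrix.transpose_mul]
    _ = A * Pᵀ := by rw [hA]
  · calc (Pᵀ * A)ᵀ = Aᵀ * P := by simp [Matrix.transpose_mul]
    _ = A * P := by rw [hA]
    _ = (A * P)ᵀ := h3.symm
    _ = Pᵀ * Aᵀ := by simp [Matrix.transpose_mul]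
    _ = Pᵀ * A := by rw [hA]

lemma pd_cancel {n k : ℕ} {G : Matrix (Fin n) (Fin n) ℝ} (hG : G.PosDef)
    {A : Matrix (Fin n) (Fin k) ℝ} (h : Aᵀ * G * A = 0) : A = 0 := by
  ext i j
  by_contra hij
  have hcol : (fun r => A r j) ≠ 0 := by
    intro h0
    exact hij (by simpa using congrFun h0 i)
  have hpos := hG.dotProduct_mulVec_pos (x := fun r => A r j) hcol
  have : (Aᵀ * G * A) j j = dotProduct (star (fun r => A r j)) (G *ᵥ fun r => A r j) := by
    simp [Matrix.mul_apply, Matrix.mulVec, dotProduct, Finset.mul_sum, Finset.sum_mul]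
    rw [Finset.sum_comm]
    congr 1; ext r; congr 1; ext s; ring
  rw [h] at this
  simp only [Matrix.zero_apply] at this
  rw [← this] at hpos
  exact lt_irrefl _ hpos

lemma key_cancel {n m : ℕ} {G : Matrix (Fin n) (Fin n) ℝ} (hG : G.PosDef)
    {HF : Matrix (Fin n) (Fin m) ℝ} {P M : Matrix (Fin m) (Fin m) ℝ}
    (hGram : HFᵀ * G * HF = M) (hP : Pᵀ = P) (hMt : Mᵀ = M)
    (hMPM : M * P * M = M) : HF * P * M = HF := by
  have hAt : (HF - HF * P * M)ᵀ = HFᵀ - M * P * HFᵀ := by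
    simp only [Matrix.transpose_sub, Matrix.transpose_mul, hP, hMt, Matrix.mul_assoc]
  have expand : (HF - HF * P * M)ᵀ * G * (HF - HF * P * M)
      = HFᵀ * G * HF - HFᵀ * G * (HF * P * M) - M * P * HFᵀ * G * HF
        + M * P * HFᵀ * G * (HF * P * M) := by
    rw [hAt]
    simp only [Matrix.sub_mul, Matrix.mul_sub]
    abel
  have T2 : HFᵀ * G * (HF * P * M) = M := by
    have e : HFᵀ * G * (HF * P * M) = HFᵀ * G * HF * P * M := by
      simp only [Matrix.mul_assoc]
    rw [e, hGram, hMPM]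
  have T3 : M * P * HFᵀ * G * HF = M := by
    have e : M * P * HFᵀ * G * HF = M * P * (HFᵀ * G * HF) := by
      simp only [Matrix.mul_assoc]
    rw [e, hGram, hMPM]
  have T4 : M * P * HFᵀ * G * (HF * P * M) = M := by
    have e : M * P * HFᵀ * G * (HF * P * M) = M * P * (HFᵀ * G * HF) * P * M := by
      simp only [Matrix.mul_assoc]
    rw [e, hGram, hMPM, hMPM]
  have h0 : (HF - HF * P * M)ᵀ * G * (HF - HF * P * M) = 0 := by
    rw [expand, hGram, T2, T3, T4]
    abel
  have h1 := pd_cancel hG h0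
  rw [sub_eq_zero] at h1
  exact h1.symm

lemma sandwich {n m : ℕ} (HF : Matrix (Fin n) (Fin m) ℝ) (P M B : Matrix (Fin m) (Fin m) ℝ)
    (ε : ℝ) (hKey : HF * P * M = HF) (hKey2 : M * P * HFᵀ = HFᵀ)
    (hB1 : (ε • (1 : Matrix (Fin m) (Fin m) ℝ) + M) * B = 1)
    (hB2 : B * (ε • (1 : Matrix (Fin m) (Fin m) ℝ) + M) = 1) :
    HF * B * HFᵀ = HF * P * HFᵀ - ε • (HF * (P * P) * HFᵀ)
      + ε ^ 2 • (HF * (P * B * P) * HFᵀ) := by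
  have hMB : M * B = 1 - ε • B := by
    rw [eq_sub_iff_add_eq']
    rw [Matrix.add_mul, Matrix.smul_mul, Matrix.one_mul] at hB1
    exact hB1
  have hBM : B * M = 1 - ε • B := by
    rw [eq_sub_iff_add_eq']
    rw [Matrix.mul_add, Matrix.mul_smul, Matrix.mul_one] at hB2
    exact hB2
  have hMBM : M * B * M = M - ε • (1 : Matrix (Fin m) (Fin m) ℝ) + ε ^ 2 • B := by
    rw [Matrix.mul_assoc, hBM, Matrix.mul_sub, Matrix.mul_one, Matrix.mul_smul, hMB]
    simp only [smul_sub, smul_smul, ← pow_two]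
    abel
  have e1 : HF * P * (M * B * M) * (P * HFᵀ) = HF * B * HFᵀ := by
    have e : HF * P * (M * B * M) * (P * HFᵀ) = (HF * P * M) * B * (M * P * HFᵀ) := by
      simp only [Matrix.mul_assoc]
    rw [e, hKey, hKey2]
  have t1 : HF * P * M * (P * HFᵀ) = HF * P * HFᵀ := by
    rw [hKey, Matrix.mul_assoc]
  have t2 : HF * P * (ε • (1 : Matrix (Fin m) (Fin m) ℝ)) * (P * HFᵀ)
      = ε • (HF * (P * P) * HFᵀ) := by
    simp only [Matrix.mul_smul, Matrix.smul_mul, Matrix.mul_one, Matrix.mul_assoc]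
  have t3 : HF * P * (ε ^ 2 • B) * (P * HFᵀ) = ε ^ 2 • (HF * (P * B * P) * HFᵀ) := by
    simp only [Matrix.mul_smul, Matrix.smul_mul, Matrix.mul_assoc]
  calc HF * B * HFᵀ = HF * P * (M * B * M) * (P * HFᵀ) := e1.symm
  _ = HF * P * (M - ε • (1 : Matrix (Fin m) (Fin m) ℝ) + ε ^ 2 • B) * (P * HFᵀ) := by
      rw [hMBM]
  _ = HF * P * M * (P * HFᵀ) - HF * P * (ε • (1 : Matrix (Fin m) (Fin m) ℝ)) * (P * HFᵀ)
      + HF * P * (ε ^ 2 • B) * (P * HFᵀ) := by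
      simp only [Matrix.mul_sub, Matrix.mul_add, Matrix.sub_mul, Matrix.add_mul]
  _ = HF * P * HFᵀ - ε • (HF * (P * P) * HFᵀ) + ε ^ 2 • (HF * (P * B * P) * HFᵀ) := by
      rw [t1, t2, t3]

lemma dot_self_nonneg {m : ℕ} (v : Fin m → ℝ) : 0 ≤ v ⬝ᵥ v :=
  Finset.sum_nonneg fun i _ => mul_self_nonneg _

lemma smul_one_posdef {m : ℕ} {ε : ℝ} (hε : 0 < ε) :
    (ε • (1 : Matrix (Fin m) (Fin m) ℝ)).PosDef := by
  refine Matrix.PosDef.of_dotProduct_mulVec_pos ?_ (fun x hx => ?_)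
  · unfold Matrix.IsHermitian
    simp [Matrix.conjTranspose_smul]
  · have hxx : 0 < x ⬝ᵥ x := by
      have : x ⬝ᵥ x ≠ 0 := by
        intro h0
        apply hx
        ext i
        have := Finset.sum_eq_zero_iff_of_nonneg
          (fun j (_ : j ∈ Finset.univ) => mul_self_nonneg (x j)) |>.mp h0 i (Finset.mem_univ i)
        exact mul_self_eq_zero.mp this
      exact lt_of_le_of_ne (dot_self_nonneg x) (Ne.symm this)
    simpa [Matrix.smul_mulVec, Matrix.one_mulVec, dotProduct_smul] using
      mul_pos hε hxx

lemma eps_bound {m : ℕ} {M : Matrix (Fin m) (Fin m) ℝ} (hM : M.PosSemidef) {ε : ℝ} (hε : 0 < ε)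
    (u v : Fin m → ℝ) :
    (u ⬝ᵥ ((ε • (1 : Matrix (Fin m) (Fin m) ℝ) + M)⁻¹ *ᵥ v)) ^ 2 * ε ^ 2
      ≤ (u ⬝ᵥ u) * (v ⬝ᵥ v) := by
  have hPD : (ε • (1 : Matrix (Fin m) (Fin m) ℝ) + M).PosDef :=
    Matrix.PosDef.add_posSemidef (smul_one_posdef hε) hM
  set y := (ε • (1 : Matrix (Fin m) (Fin m) ℝ) + M)⁻¹ *ᵥ v with hy
  have hv : (ε • (1 : Matrix (Fin m) (Fin m) ℝ) + M) *ᵥ y = v := by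
    rw [hy, Matrix.mulVec_mulVec, Matrix.mul_nonsing_inv _ hPD.det_pos.ne'.isUnit, Matrix.one_mulVec]
  have hexp : v ⬝ᵥ v = ε ^ 2 * (y ⬝ᵥ y) + 2 * ε * (y ⬝ᵥ (M *ᵥ y)) + (M *ᵥ y) ⬝ᵥ (M *ᵥ y) := by
    conv_lhs => rw [← hv]
    rw [Matrix.add_mulVec, Matrix.smul_mulVec, Matrix.one_mulVec]
    simp only [dotProduct_add, add_dotProduct, smul_dotProduct, dotProduct_smul,
      dotProduct_comm (M *ᵥ y) y, smul_eq_mul]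
    ring
  have hMy : 0 ≤ y ⬝ᵥ (M *ᵥ y) := by simpa using hM.dotProduct_mulVec_nonneg y
  have hww : 0 ≤ (M *ᵥ y) ⬝ᵥ (M *ᵥ y) := dot_self_nonneg _
  have hyy : ε ^ 2 * (y ⬝ᵥ y) ≤ v ⬝ᵥ v := by nlinarith
  have hcs : (u ⬝ᵥ y) ^ 2 ≤ (u ⬝ᵥ u) * (y ⬝ᵥ y) := by
    have := Finset.sum_mul_sq_le_sq_mul_sq Finset.univ u y
    simpa [dotProduct, pow_two] using this
  nlinarith [mul_le_mul_of_nonneg_right hcs (sq_nonneg ε),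
    mul_le_mul_of_nonneg_left hyy (dot_self_nonneg u)]

lemma entry_eq {a b c d : ℕ} (U : Matrix (Fin a) (Fin b) ℝ) (B : Matrix (Fin b) (Fin c) ℝ)
    (V : Matrix (Fin c) (Fin d) ℝ) (i : Fin a) (j : Fin d) :
    (U * B * V) i j = U i ⬝ᵥ (B *ᵥ fun k => V k j) := by
  rw [Matrix.mul_assoc]
  simp [Matrix.mul_apply, Matrix.mulVec, dotProduct, Finset.mul_sum]

/-- As `t → ∞`, `I(t) = Hᵀ (t·HF HFᵀ + SN)⁻¹ H` converges to
`Hᵀ SN⁻¹ H - Hᵀ SN⁻¹ HF (HFᵀ SN⁻¹ HF)⁺ HFᵀ SN⁻¹ H`, and if `HF` has full column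
rank the pseudoinverse is the ordinary inverse. -/
theorem stmt2 (n p m : ℕ) (SN : Matrix (Fin n) (Fin n) ℝ) (H : Matrix (Fin n) (Fin p) ℝ)
    (HF : Matrix (Fin n) (Fin m) ℝ) (hN : SN.PosDef) :
    (∀ P : Matrix (Fin m) (Fin m) ℝ, IsMoorePenrose (HFᵀ * SN⁻¹ * HF) P →
      Tendsto (fun t : ℝ => Hᵀ * (t • (HF * HFᵀ) + SN)⁻¹ * H) atTop
        (𝓝 (Hᵀ * SN⁻¹ * H - Hᵀ * SN⁻¹ * HF * P * HFᵀ * SN⁻¹ * H))) ∧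
    (HF.rank = m →
      Tendsto (fun t : ℝ => Hᵀ * (t • (HF * HFᵀ) + SN)⁻¹ * H) atTop
        (𝓝 (Hᵀ * SN⁻¹ * H - Hᵀ * SN⁻¹ * HF * (HFᵀ * SN⁻¹ * HF)⁻¹ * HFᵀ * SN⁻¹ * H))) := by
  have hG : (SN⁻¹).PosDef := hN.inv
  have hGt : (SN⁻¹)ᵀ = SN⁻¹ := by
    have := hG.isHermitian
    rwa [Matrix.IsHermitian, Matrix.conjTranspose_eq_transpose_of_trivial] at this
  have hMt : (HFᵀ * SN⁻¹ * HF)ᵀ = HFᵀ * SN⁻¹ * HF := by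
    simp [Matrix.transpose_mul, hGt, Matrix.mul_assoc]
  have hMpsd : (HFᵀ * SN⁻¹ * HF).PosSemidef := by
    have := hG.posSemidef.conjTranspose_mul_mul_same HF
    rwa [Matrix.conjTranspose_eq_transpose_of_trivial] at this
  have main : ∀ P : Matrix (Fin m) (Fin m) ℝ, IsMoorePenrose (HFᵀ * SN⁻¹ * HF) P →
      Tendsto (fun t : ℝ => Hᵀ * (t • (HF * HFᵀ) + SN)⁻¹ * H) atTop
        (𝓝 (Hᵀ * SN⁻¹ * H - Hᵀ * SN⁻¹ * HF * P * HFᵀ * SN⁻¹ * H)) := by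
    intro P hPen
    have hPs : Pᵀ = P := mp_symm hMt hPen
    have hMPM : HFᵀ * SN⁻¹ * HF * P * (HFᵀ * SN⁻¹ * HF) = HFᵀ * SN⁻¹ * HF := hPen.1
    have hKey : HF * P * (HFᵀ * SN⁻¹ * HF) = HF := key_cancel hG rfl hPs hMt hMPM
    have hKey2 : HFᵀ * SN⁻¹ * HF * P * HFᵀ = HFᵀ := by
      calc HFᵀ * SN⁻¹ * HF * P * HFᵀ = (HF * Pᵀ * (HFᵀ * SN⁻¹ * HF)ᵀ)ᵀ := by
            simp [Matrix.transpose_mul, Matrix.transpose_transpose, Matrix.mul_assoc]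
      _ = (HF * P * (HFᵀ * SN⁻¹ * HF))ᵀ := by rw [hPs, hMt]
      _ = HFᵀ := by rw [hKey]
    -- eventual identity
    have hev : ∀ᶠ t : ℝ in atTop,
        Hᵀ * (t • (HF * HFᵀ) + SN)⁻¹ * H
          = (Hᵀ * SN⁻¹ * H - Hᵀ * SN⁻¹ * HF * P * HFᵀ * SN⁻¹ * H
              + t⁻¹ • (Hᵀ * SN⁻¹ * (HF * (P * P) * HFᵀ) * SN⁻¹ * H))
            - (t⁻¹) ^ 2 • (Hᵀ * SN⁻¹ * (HF *
                (P * (t⁻¹ • (1 : Matrix (Fin m) (Fin m) ℝ) + HFᵀ * SN⁻¹ * HF)⁻¹ * P) * HFᵀ)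
                * SN⁻¹ * H) := by
      filter_upwards [eventually_gt_atTop (0 : ℝ)] with t ht
      have ht0 : t ≠ 0 := ne_of_gt ht
      have hε : 0 < t⁻¹ := inv_pos.mpr ht
      have hEpd : (t⁻¹ • (1 : Matrix (Fin m) (Fin m) ℝ) + HFᵀ * SN⁻¹ * HF).PosDef :=
        Matrix.PosDef.add_posSemidef (smul_one_posdef hε) hMpsd
      have hB1 : (t⁻¹ • (1 : Matrix (Fin m) (Fin m) ℝ) + HFᵀ * SN⁻¹ * HF) *
          (t⁻¹ • (1 : Matrix (Fin m) (Fin m) ℝ) + HFᵀ * SN⁻¹ * HF)⁻¹ = 1 :=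
        Matrix.mul_nonsing_inv _ hEpd.det_pos.ne'.isUnit
      have hB2 : (t⁻¹ • (1 : Matrix (Fin m) (Fin m) ℝ) + HFᵀ * SN⁻¹ * HF)⁻¹ *
          (t⁻¹ • (1 : Matrix (Fin m) (Fin m) ℝ) + HFᵀ * SN⁻¹ * HF) = 1 :=
        Matrix.nonsing_inv_mul _ hEpd.det_pos.ne'.isUnit
      have hCinv : (t • (1 : Matrix (Fin m) (Fin m) ℝ))⁻¹
          = t⁻¹ • (1 : Matrix (Fin m) (Fin m) ℝ) := by
        apply Matrix.inv_eq_right_inv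
        rw [Matrix.smul_mul, Matrix.mul_smul, Matrix.one_mul, smul_smul,
          mul_inv_cancel₀ ht0, one_smul]
      have hC : IsUnit (t • (1 : Matrix (Fin m) (Fin m) ℝ)) := (smul_one_posdef ht).isUnit
      have hAC : IsUnit ((t • (1 : Matrix (Fin m) (Fin m) ℝ))⁻¹ + HFᵀ * SN⁻¹ * HF) := by
        rw [hCinv]; exact hEpd.isUnit
      have hrw : t • (HF * HFᵀ) + SN = SN + HF * (t • (1 : Matrix (Fin m) (Fin m) ℝ)) * HFᵀ := by
        rw [Matrix.mul_smul, Matrix.mul_one, Matrix.smul_mul]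
        exact add_comm _ _
      have hW := Matrix.add_mul_mul_inv_eq_sub SN HF (t • (1 : Matrix (Fin m) (Fin m) ℝ)) HFᵀ
        hN.isUnit hC hAC
      rw [hCinv] at hW
      calc Hᵀ * (t • (HF * HFᵀ) + SN)⁻¹ * H
          = Hᵀ * (SN⁻¹ - SN⁻¹ * HF *
              (t⁻¹ • (1 : Matrix (Fin m) (Fin m) ℝ) + HFᵀ * SN⁻¹ * HF)⁻¹ * HFᵀ * SN⁻¹) * H := by
            rw [hrw, hW]
        _ = Hᵀ * SN⁻¹ * H - Hᵀ * SN⁻¹ * (HF *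
              (t⁻¹ • (1 : Matrix (Fin m) (Fin m) ℝ) + HFᵀ * SN⁻¹ * HF)⁻¹ * HFᵀ) * SN⁻¹ * H := by
            simp only [Matrix.mul_sub, Matrix.sub_mul, Matrix.mul_assoc]
        _ = _ := by
            rw [sandwich HF P (HFᵀ * SN⁻¹ * HF) _ t⁻¹ hKey hKey2 hB1 hB2]
            simp only [Matrix.mul_sub, Matrix.sub_mul, Matrix.mul_add, Matrix.add_mul,
              Matrix.mul_smul, Matrix.smul_mul, Matrix.mul_assoc]
            abel
    -- limits
    have lim1 : Tendsto (fun t : ℝ => Hᵀ * SN⁻¹ * H - Hᵀ * SN⁻¹ * HF * P * HFᵀ * SN⁻¹ * H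
        + t⁻¹ • (Hᵀ * SN⁻¹ * (HF * (P * P) * HFᵀ) * SN⁻¹ * H)) atTop
        (𝓝 (Hᵀ * SN⁻¹ * H - Hᵀ * SN⁻¹ * HF * P * HFᵀ * SN⁻¹ * H)) := by
      have h0 := (tendsto_inv_atTop_zero (𝕜 := ℝ)).smul_const
        (Hᵀ * SN⁻¹ * (HF * (P * P) * HFᵀ) * SN⁻¹ * H)
      rw [zero_smul] at h0
      simpa using tendsto_const_nhds.add h0
    have lim2 : Tendsto (fun t : ℝ => (t⁻¹) ^ 2 • (Hᵀ * SN⁻¹ * (HF *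
        (P * (t⁻¹ • (1 : Matrix (Fin m) (Fin m) ℝ) + HFᵀ * SN⁻¹ * HF)⁻¹ * P) * HFᵀ)
        * SN⁻¹ * H)) atTop (𝓝 (0 : Matrix (Fin p) (Fin p) ℝ)) := by
      refine tendsto_pi_nhds.mpr ?_
      intro i
      refine tendsto_pi_nhds.mpr ?_
      intro j
      simp only [Matrix.zero_apply]
      set U := Hᵀ * SN⁻¹ * (HF * P) with hU
      set V := P * HFᵀ * SN⁻¹ * H with hV
      have harr : ∀ t : ℝ, Hᵀ * SN⁻¹ * (HF *
          (P * (t⁻¹ • (1 : Matrix (Fin m) (Fin m) ℝ) + HFᵀ * SN⁻¹ * HF)⁻¹ * P) * HFᵀ)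
          * SN⁻¹ * H
          = U * (t⁻¹ • (1 : Matrix (Fin m) (Fin m) ℝ) + HFᵀ * SN⁻¹ * HF)⁻¹ * V := by
        intro t
        rw [hU, hV]
        simp only [Matrix.mul_assoc]
      set c : ℝ := Real.sqrt ((U i ⬝ᵥ U i) * ((fun k => V k j) ⬝ᵥ (fun k => V k j))) with hc
      have hcnn : 0 ≤ c := Real.sqrt_nonneg _
      have hcsq : c ^ 2 = (U i ⬝ᵥ U i) * ((fun k => V k j) ⬝ᵥ (fun k => V k j)) := by
        rw [hc, Real.sq_sqrt (mul_nonneg (dot_self_nonneg _) (dot_self_nonneg _))]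
      have hb : ∀ᶠ t : ℝ in atTop, ‖((t⁻¹) ^ 2 • (Hᵀ * SN⁻¹ * (HF *
          (P * (t⁻¹ • (1 : Matrix (Fin m) (Fin m) ℝ) + HFᵀ * SN⁻¹ * HF)⁻¹ * P) * HFᵀ)
          * SN⁻¹ * H)) i j‖ ≤ t⁻¹ * c := by
        filter_upwards [eventually_gt_atTop (0 : ℝ)] with t ht
        have hε : 0 < t⁻¹ := inv_pos.mpr ht
        have hEnt : ((t⁻¹) ^ 2 • (Hᵀ * SN⁻¹ * (HF *
            (P * (t⁻¹ • (1 : Matrix (Fin m) (Fin m) ℝ) + HFᵀ * SN⁻¹ * HF)⁻¹ * P) * HFᵀ)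
            * SN⁻¹ * H)) i j
            = (t⁻¹) ^ 2 * (U i ⬝ᵥ ((t⁻¹ • (1 : Matrix (Fin m) (Fin m) ℝ)
                + HFᵀ * SN⁻¹ * HF)⁻¹ *ᵥ fun k => V k j)) := by
          rw [Matrix.smul_apply, harr t, entry_eq]
          simp [smul_eq_mul]
        rw [hEnt]
        have hbd := eps_bound hMpsd hε (U i) (fun k => V k j)
        set d : ℝ := U i ⬝ᵥ ((t⁻¹ • (1 : Matrix (Fin m) (Fin m) ℝ)
            + HFᵀ * SN⁻¹ * HF)⁻¹ *ᵥ fun k => V k j) with hd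
        have h1 : (t⁻¹ * d) ^ 2 ≤ c ^ 2 := by
          rw [hcsq]
          calc (t⁻¹ * d) ^ 2 = d ^ 2 * (t⁻¹) ^ 2 := by ring
          _ ≤ _ := hbd
        have h2 : |t⁻¹ * d| ≤ c := by
          nlinarith [sq_abs (t⁻¹ * d), abs_nonneg (t⁻¹ * d)]
        rw [show (t⁻¹) ^ 2 * d = t⁻¹ * (t⁻¹ * d) by ring]
        rw [Real.norm_eq_abs, abs_mul, abs_of_pos hε]
        exact mul_le_mul_of_nonneg_left h2 (le_of_lt hε)
      refine squeeze_zero_norm' hb ?_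
      have := (tendsto_inv_atTop_zero (𝕜 := ℝ)).mul_const c
      simpa using this
    have hfin := lim1.sub lim2
    rw [sub_zero] at hfin
    exact Tendsto.congr' (Filter.EventuallyEq.symm hev) hfin
  refine ⟨main, fun hrank => ?_⟩
  -- full column rank case
  have hinj : Function.Injective (Matrix.mulVec HF) := by
    have h5 := LinearMap.finrank_range_add_finrank_ker (Matrix.mulVecLin HF)
    rw [show Module.finrank ℝ (LinearMap.range HF.mulVecLin) = m from hrank,
      Module.finrank_fin_fun] at h5
    have hker : LinearMap.ker HF.mulVecLin = ⊥ := by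
      apply Submodule.finrank_eq_zero.mp
      omega
    have hinj' := LinearMap.ker_eq_bot.mp hker
    intro x y hxy
    exact hinj' (by simpa [Matrix.mulVecLin_apply] using hxy)
  have hMpd : (HFᵀ * SN⁻¹ * HF).PosDef := by
    refine Matrix.PosDef.of_dotProduct_mulVec_pos hMpsd.1 (fun x hx => ?_)
    have hHFx : HF *ᵥ x ≠ 0 := by
      intro h0
      apply hx
      apply hinj
      rw [h0, Matrix.mulVec_zero]
    have hq := hG.dotProduct_mulVec_pos hHFx
    have : (HFᵀ * SN⁻¹ * HF) *ᵥ x = HFᵀ *ᵥ (SN⁻¹ *ᵥ (HF *ᵥ x)) := by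
      rw [Matrix.mulVec_mulVec, Matrix.mulVec_mulVec]
    rw [this]
    simp only [star_trivial] at hq ⊢
    rwa [dotProduct_mulVec, Matrix.vecMul_transpose]
  have hPen : IsMoorePenrose (HFᵀ * SN⁻¹ * HF) (HFᵀ * SN⁻¹ * HF)⁻¹ := by
    have hu := hMpd.det_pos.ne'.isUnit
    refine ⟨?_, ?_, ?_, ?_⟩
    · rw [Matrix.mul_nonsing_inv _ hu, Matrix.one_mul]
    · rw [Matrix.nonsing_inv_mul _ hu, Matrix.one_mul]
    · rw [Matrix.mul_nonsing_inv _ hu, Matrix.transpose_one]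
    · rw [Matrix.nonsing_inv_mul _ hu, Matrix.transpose_one]
  exact main _ hPen
end

section
/- Let X and Y be random vectors in R^n on the same probability space with E[‖X‖²] < ∞ and E[‖Y‖²] < ∞, and suppose Z ∈ R^{n×n} is a symmetric matrix with E[(X-Y)(X-Y)ᵀ] ⪰ Z (Loewner order). Then for any m×n matrix C and any m×m symmetric positive definite matrix Σ, E[(C(X-Y))ᵀ Σ⁻¹ (C(X-Y))] ≥ tr(Cᵀ Σ⁻¹ C Z). -/
open Matrix MeasureTheory

private lemma memLp_mul_integrable {Ω : Type*} [MeasureSpace Ω] {f g : Ω → ℝ}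
    (hf : MemLp f 2) (hg : MemLp g 2) : Integrable (fun ω => f ω * g ω) := by
  have h1 := (hf.add hg).integrable_sq
  have h2 := hf.integrable_sq
  have h3 := hg.integrable_sq
  have : Integrable (fun ω => (((f ω + g ω) ^ 2 - f ω ^ 2) - g ω ^ 2) * (1 / 2)) :=
    ((h1.sub h2).sub h3).mul_const _
  convert this using 2 with ω
  ring

open scoped MatrixOrder in
private lemma psd_trace_nonneg {n : ℕ} {A B : Matrix (Fin n) (Fin n) ℝ}
    (hA : A.PosSemidef) (hB : B.PosSemidef) : 0 ≤ (A * B).trace := by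
  have h1 : A * B = A * (CFC.sqrt B * CFC.sqrt B) := by rw [CFC.sqrt_mul_sqrt_self B hB.nonneg]
  rw [h1, ← mul_assoc, Matrix.trace_mul_cycle]
  have hs : (CFC.sqrt B)ᴴ = CFC.sqrt B := (CFC.sqrt_nonneg B).posSemidef.isHermitian
  have hpsd : ((CFC.sqrt B)ᴴ * A * CFC.sqrt B).PosSemidef := hA.conjTranspose_mul_mul_same _
  rw [hs] at hpsd
  rw [Matrix.trace]
  exact Finset.sum_nonneg fun i _ => hpsd.diag_nonneg

/-- Detection-statistic lower bound: if `Z` is a symmetric lower bound (in the Loewner order)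
on the second-moment matrix `E[(X-Y)(X-Y)ᵀ]`, then for any `C` and `S ≻ 0`,
`E[(C(X-Y))ᵀ S⁻¹ (C(X-Y))] ≥ tr(Cᵀ S⁻¹ C Z)`. -/
theorem stmt5 (n m : ℕ) (Ω : Type*) [MeasureSpace Ω] [IsProbabilityMeasure (volume : Measure Ω)]
    (X Y : Ω → Fin n → ℝ)
    (hX : ∀ i, MemLp (fun ω => X ω i) 2) (hY : ∀ i, MemLp (fun ω => Y ω i) 2)
    (Z : Matrix (Fin n) (Fin n) ℝ) (hZsymm : Z.IsSymm)
    (hZ : ((Matrix.of fun i j => ∫ ω, (X ω i - Y ω i) * (X ω j - Y ω j)) - Z).PosSemidef)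
    (C : Matrix (Fin m) (Fin n) ℝ) (S : Matrix (Fin m) (Fin m) ℝ) (hS : S.PosDef) :
    (Cᵀ * S⁻¹ * C * Z).trace ≤
      ∫ ω, C.mulVec (X ω - Y ω) ⬝ᵥ S⁻¹.mulVec (C.mulVec (X ω - Y ω)) := by
  set v : Ω → Fin n → ℝ := fun ω => X ω - Y ω with hv
  set A : Matrix (Fin n) (Fin n) ℝ := Cᵀ * S⁻¹ * C with hA
  set M : Matrix (Fin n) (Fin n) ℝ :=
    Matrix.of fun i j => ∫ ω, (X ω i - Y ω i) * (X ω j - Y ω j) with hM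
  -- integrability of products
  have hint : ∀ i j : Fin n, Integrable (fun ω => v ω i * v ω j) := fun i j =>
    memLp_mul_integrable ((hX i).sub (hY i)) ((hX j).sub (hY j))
  -- A is positive semidefinite
  have hSinv : (S⁻¹).PosSemidef := hS.inv.posSemidef
  have hApsd : A.PosSemidef := by
    have := hSinv.conjTranspose_mul_mul_same C
    simpa [hA, Matrix.conjTranspose_eq_transpose_of_trivial] using this
  -- rewrite the integrand
  have hpt : ∀ ω, C.mulVec (v ω) ⬝ᵥ S⁻¹.mulVec (C.mulVec (v ω)) =
      ∑ i, ∑ j, A i j * (v ω i * v ω j) := by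
    intro ω
    have h1 : v ω ⬝ᵥ A *ᵥ v ω = C *ᵥ v ω ⬝ᵥ S⁻¹ *ᵥ C *ᵥ v ω := by
      rw [hA, ← Matrix.mulVec_mulVec, ← Matrix.mulVec_mulVec, dotProduct_mulVec,
        Matrix.vecMul_transpose]
    rw [← h1]
    simp only [dotProduct, Matrix.mulVec, Finset.mul_sum]
    exact Finset.sum_congr rfl fun i _ => Finset.sum_congr rfl fun j _ => by ring
  -- compute the integral
  have hint2 : ∫ ω, C.mulVec (v ω) ⬝ᵥ S⁻¹.mulVec (C.mulVec (v ω)) = (A * M).trace := by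
    simp_rw [hpt]
    rw [integral_finset_sum _ fun i _ => integrable_finset_sum _
      fun j _ => (hint i j).const_mul (A i j)]
    rw [Matrix.trace]
    refine Finset.sum_congr rfl fun i _ => ?_
    rw [integral_finset_sum _ fun j _ => (hint i j).const_mul (A i j)]
    simp only [Matrix.diag_apply, Matrix.mul_apply]
    refine Finset.sum_congr rfl fun j _ => ?_
    rw [integral_const_mul]
    congr 1
    have hfun : (fun ω => v ω i * v ω j) = fun ω => (X ω j - Y ω j) * (X ω i - Y ω i) := by
      funext ω; simp [hv, mul_comm]
    rw [hfun]
    rfl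
  rw [hint2]
  -- trace inequality
  have key : 0 ≤ (A * (M - Z)).trace := psd_trace_nonneg hApsd hZ
  rw [Matrix.mul_sub, Matrix.trace_sub] at key
  linarith
end
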